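/- arXiv:1010.6022 — 6 statements merged into one kernel-verified Lean document; each statement's English description precedes it below -/
import Mathlib

section
/- Let κ ≥ 1 be an integer and (u_k)_{k≥0} a sequence of positive reals satisfying u_k · U_l ≤ U_{k+l+κ} for all k, l ≥ 0, where U_n = u_0 + ... + u_n. Then for all b, q, r with 0 ≤ r < b, setting m = (b+κ)q + r + κ, one has (U_m)^{1/m} ≥ (u_r)^{1/m} · (u_b)^{q/m}. -/
open Filter Finset

theorem partial_sum_root_lower_bound
    (κ : ℕ) (hκ : 1 ≤ κ)
    (u : ℕ → ℝ) (hpos : ∀ n, 0 < u n)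
    (U : ℕ → ℝ) (hU : ∀ n, U n = ∑ i ∈ Finset.range (n + 1), u i)
    (h : ∀ k l : ℕ, u k * U l ≤ U (k + l + κ)) :
    ∀ b q r : ℕ, r < b →
      (u r) ^ ((1 : ℝ) / ((b + κ) * q + r + κ)) *
          (u b) ^ ((q : ℝ) / ((b + κ) * q + r + κ)) ≤
        (U ((b + κ) * q + r + κ)) ^ ((1 : ℝ) / ((b + κ) * q + r + κ)) := by
  intro b q r hrb
  have key : ∀ n : ℕ, u r * (u b) ^ n ≤ U ((b + κ) * n + r + κ) := by
    intro n
    induction n with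
    | zero =>
      simp only [pow_zero, mul_one, Nat.mul_zero, Nat.zero_add]
      rw [hU]
      exact Finset.single_le_sum (f := u) (fun i _ => (hpos i).le)
        (Finset.mem_range.mpr (by omega))
    | succ n ih =>
      have h1 := h b ((b + κ) * n + r + κ)
      have heq : b + ((b + κ) * n + r + κ) + κ = (b + κ) * (n + 1) + r + κ := by ring
      rw [heq] at h1
      calc u r * u b ^ (n + 1) = u b * (u r * u b ^ n) := by ring
        _ ≤ u b * U ((b + κ) * n + r + κ) := by
            exact mul_le_mul_of_nonneg_left ih (hpos b).le
        _ ≤ U ((b + κ) * (n + 1) + r + κ) := h1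
  set M : ℝ := ((b : ℝ) + κ) * q + r + κ with hMdef
  have hMeq : M = (((b + κ) * q + r + κ : ℕ) : ℝ) := by push_cast; ring
  have hMpos : 0 < M := by
    rw [hMeq]
    exact_mod_cast Nat.lt_of_lt_of_le hκ (by omega)
  have hub : u b ^ ((q : ℝ) / M) = (u b ^ q) ^ ((1 : ℝ) / M) := by
    rw [← Real.rpow_natCast (u b) q, ← Real.rpow_mul (hpos b).le]
    ring_nf
  rw [hub, ← Real.mul_rpow (hpos r).le (pow_nonneg (hpos b).le q)]
  exact Real.rpow_le_rpow (mul_pos (hpos r) (pow_pos (hpos b) q)).le (key q) (one_div_nonneg.mpr hMpos.le)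
end

section
/- Let κ ≥ 1 and (u_k)_{k≥0} be positive reals with u_k · U_l ≤ U_{k+l+κ} for all k, l ≥ 0 (U_n the partial sums), and suppose (U_n)^{1/n} → u. Then for every b ≥ 0, u ≥ (u_b)^{1/(b+κ)}; consequently u_b ≤ u^{b+κ} for all b. -/
open Filter Finset

theorem term_bounded_by_limit_power
    (κ : ℕ) (hκ : 1 ≤ κ)
    (u : ℕ → ℝ) (hpos : ∀ n, 0 < u n)
    (U : ℕ → ℝ) (hU : ∀ n, U n = ∑ i ∈ Finset.range (n + 1), u i)
    (h : ∀ k l : ℕ, u k * U l ≤ U (k + l + κ))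
    (v : ℝ) (hv : 1 ≤ v)
    (hlim : Filter.Tendsto (fun n : ℕ => (U n) ^ ((1 : ℝ) / n)) Filter.atTop (nhds v)) :
    ∀ b : ℕ, (u b) ^ ((1 : ℝ) / (b + κ)) ≤ v ∧ u b ≤ v ^ (b + κ) := by
  intro b
  have hNpos : 0 < b + κ := lt_of_lt_of_le Nat.zero_lt_one (hκ.trans (Nat.le_add_left κ b))
  have hUpos : ∀ n, 0 < U n := fun n => by
    rw [hU]; exact Finset.sum_pos (fun i _ => hpos i) ⟨0, by simp⟩
  have key : ∀ m, (u b) ^ m * U 0 ≤ U (m * (b + κ)) := by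
    intro m
    induction m with
    | zero => simp
    | succ m ih =>
      have h1 : u b * U (m * (b + κ)) ≤ U (b + m * (b + κ) + κ) := h b (m * (b + κ))
      have h2 : b + m * (b + κ) + κ = (m + 1) * (b + κ) := by ring
      calc (u b) ^ (m + 1) * U 0 = u b * ((u b) ^ m * U 0) := by ring
        _ ≤ u b * U (m * (b + κ)) := mul_le_mul_of_nonneg_left ih (hpos b).le
        _ ≤ U ((m + 1) * (b + κ)) := by rw [← h2]; exact h1
  -- limit of exponents
  have texp : Tendsto (fun m : ℕ => (1 : ℝ) / (m * (b + κ))) atTop (nhds 0) := by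
    have := tendsto_one_div_atTop_nhds_zero_nat.mul_const ((1 : ℝ) / (b + κ))
    simp only [zero_mul] at this
    convert this using 2 with m
    field_simp
  have t1 : Tendsto (fun m : ℕ => (U 0) ^ ((1 : ℝ) / (m * (b + κ)))) atTop
      (nhds 1) := by
    have hc := (Real.continuousAt_const_rpow (a := U 0) (b := 0) (ne_of_gt (hUpos 0))).tendsto
    have := hc.comp texp
    simpa [Function.comp_def] using this
  have t2 : Tendsto (fun m : ℕ => (u b) ^ ((1 : ℝ) / (b + κ)) * (U 0) ^ ((1 : ℝ) / (m * (b + κ))))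
      atTop (nhds ((u b) ^ ((1 : ℝ) / (b + κ)))) := by
    simpa using t1.const_mul ((u b) ^ ((1 : ℝ) / (b + κ)))
  have t3 : Tendsto (fun m : ℕ => (U (m * (b + κ))) ^ ((1 : ℝ) / (m * (b + κ)))) atTop
      (nhds v) := by
    have hmul : Tendsto (fun m : ℕ => m * (b + κ)) atTop atTop :=
      Tendsto.atTop_mul_const' hNpos tendsto_id
    have := hlim.comp hmul
    refine this.congr fun m => ?_
    simp only [Function.comp]
    congr 1
    push_cast
    ring
  have main : (u b) ^ ((1 : ℝ) / (b + κ)) ≤ v := by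
    refine le_of_tendsto_of_tendsto t2 t3 ?_
    filter_upwards [eventually_ge_atTop 1] with m hm
    have hmpos : (0 : ℝ) < m := by exact_mod_cast hm
    have hNR : (0 : ℝ) < (b : ℝ) + κ := by exact_mod_cast hNpos
    have heq : (u b) ^ ((1 : ℝ) / (b + κ)) * (U 0) ^ ((1 : ℝ) / (m * (b + κ)))
        = ((u b) ^ m * U 0) ^ ((1 : ℝ) / (m * (b + κ))) := by
      rw [Real.mul_rpow (pow_nonneg (hpos b).le m) (hUpos 0).le]
      congr 1
      rw [← Real.rpow_natCast (u b) m, ← Real.rpow_mul (hpos b).le]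
      congr 1
      field_simp
    rw [heq]
    apply Real.rpow_le_rpow (mul_nonneg (pow_nonneg (hpos b).le m) (hUpos 0).le)
      (by have := key m; push_cast at this ⊢; convert this using 3 <;> push_cast <;> ring)
    positivity
  refine ⟨main, ?_⟩
  have hNR : (0 : ℝ) < (b : ℝ) + κ := by exact_mod_cast hNpos
  have hle : ((u b) ^ ((1 : ℝ) / (b + κ))) ^ (b + κ) ≤ v ^ (b + κ) :=
    pow_le_pow_left₀ (Real.rpow_nonneg (hpos b).le _) main _
  calc u b = ((u b) ^ ((1 : ℝ) / (b + κ))) ^ (b + κ) := by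
        rw [← Real.rpow_natCast ((u b) ^ ((1 : ℝ) / (b + κ))) (b + κ),
          ← Real.rpow_mul (hpos b).le]
        push_cast
        rw [one_div, inv_mul_cancel₀ (ne_of_gt hNR), Real.rpow_one]
    _ ≤ v ^ (b + κ) := hle
end

section
/- Let (w_n)_{n≥1} be nonnegative reals satisfying w_{n+m} ≤ W_n · W_m for all n, m ≥ 1, where W_n = w_1 + ... + w_n. Set 𝑊̃_n = 1 + W_1 + ... + W_n. Then W_{n+m} ≤ W_n · 𝑊̃_m and 𝑊̃_{n+m} ≤ 𝑊̃_n · 𝑊̃_m for all n, m ≥ 1; in particular (log 𝑊̃_n) is subadditive and (1/n) log 𝑊̃_n converges to L := inf_{n≥1} (1/n) log 𝑊̃_n. -/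
open Filter Finset

theorem tilde_W_submultiplicative_and_fekete
    (w : ℕ → ℝ) (hw : ∀ n, 0 ≤ w n)
    (W : ℕ → ℝ) (hW : ∀ n, W n = ∑ k ∈ Finset.Icc 1 n, w k)
    (Wt : ℕ → ℝ) (hWt : ∀ n, Wt n = 1 + ∑ k ∈ Finset.Icc 1 n, W k)
    (h : ∀ n m, 1 ≤ n → 1 ≤ m → w (n + m) ≤ W n * W m) :
    (∀ n m, 1 ≤ n → 1 ≤ m →
        W (n + m) ≤ W n * Wt m ∧ Wt (n + m) ≤ Wt n * Wt m) ∧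
      Filter.Tendsto (fun n : ℕ => Real.log (Wt n) / n) Filter.atTop
        (nhds (⨅ n : ℕ, Real.log (Wt (n + 1)) / (n + 1))) := by
  have hWnn : ∀ n, 0 ≤ W n := by
    intro n; rw [hW]; exact Finset.sum_nonneg fun k _ => hw k
  have hWt1 : ∀ n, 1 ≤ Wt n := by
    intro n; rw [hWt]
    nlinarith [Finset.sum_nonneg (fun k (_ : k ∈ Finset.Icc 1 n) => hWnn k)]
  have hWtpos : ∀ n, 0 < Wt n := fun n => lt_of_lt_of_le one_pos (hWt1 n)
  have hWstep : ∀ k, W (k + 1) = W k + w (k + 1) := by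
    intro k
    rw [hW, hW, Finset.sum_Icc_succ_top (Nat.le_add_left 1 k)]
  have hWtstep : ∀ k, Wt (k + 1) = Wt k + W (k + 1) := by
    intro k
    rw [hWt, hWt, Finset.sum_Icc_succ_top (Nat.le_add_left 1 k)]
    ring
  have hWt0 : Wt 0 = 1 := by simp [hWt]
  -- key1 : W (n+m) ≤ W n * Wt m for n,m ≥ 1
  have key1 : ∀ n m, 1 ≤ n → 1 ≤ m → W (n + m) ≤ W n * Wt m := by
    intro n m hn hm
    induction m with
    | zero => omega
    | succ m ih =>
      have hWt1v : Wt 1 = 1 + W 1 := by rw [hWtstep 0, hWt0]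
      rcases Nat.eq_zero_or_pos m with hm0 | hm0
      · subst hm0
        have hw' := h n 1 hn le_rfl
        rw [hWstep n, hWt1v, mul_add, mul_one]
        linarith
      · have ih' := ih hm0
        have hw' := h n (m + 1) hn (by omega)
        rw [show n + (m + 1) = (n + m) + 1 from rfl] at hw'
        rw [show n + (m + 1) = (n + m) + 1 from rfl, hWstep, hWtstep, mul_add]
        linarith
  -- key2
  have key2 : ∀ n m, 1 ≤ n → 1 ≤ m → Wt (n + m) ≤ Wt n * Wt m := by
    intro n m hn hm
    induction m with
    | zero => omega
    | succ m ih =>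
      have hWt1v : Wt 1 = 1 + W 1 := by rw [hWtstep 0, hWt0]
      rcases Nat.eq_zero_or_pos m with hm0 | hm0
      · subst hm0
        have h1 := key1 1 n le_rfl hn
        rw [show 1 + n = n + 1 by omega, mul_comm (W 1) (Wt n)] at h1
        rw [hWtstep n, hWt1v, mul_add, mul_one]
        linarith
      · have ih' := ih hm0
        have h1 := key1 (m + 1) n (by omega) hn
        rw [show (m + 1) + n = (n + m) + 1 by omega, mul_comm (W (m + 1)) (Wt n)] at h1
        rw [show n + (m + 1) = (n + m) + 1 from rfl, hWtstep, hWtstep, mul_add]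
        linarith
  refine ⟨fun n m hn hm => ⟨key1 n m hn hm, key2 n m hn hm⟩, ?_⟩
  -- Fekete
  have hsub : Subadditive (fun n => Real.log (Wt n)) := by
    intro n m
    rcases Nat.eq_zero_or_pos n with hn | hn
    · subst hn; simp [hWt0]
    rcases Nat.eq_zero_or_pos m with hm | hm
    · subst hm; simp [hWt0]
    calc Real.log (Wt (n + m)) ≤ Real.log (Wt n * Wt m) :=
          Real.log_le_log (hWtpos _) (key2 n m hn hm)
      _ = Real.log (Wt n) + Real.log (Wt m) :=
          Real.log_mul (ne_of_gt (hWtpos n)) (ne_of_gt (hWtpos m))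
  have hbdd : BddBelow (Set.range fun n : ℕ => Real.log (Wt n) / n) := by
    refine ⟨0, ?_⟩
    rintro x ⟨n, rfl⟩
    exact div_nonneg (Real.log_nonneg (hWt1 n)) (Nat.cast_nonneg n)
  have hlim := hsub.tendsto_lim hbdd
  have heq : hsub.lim = ⨅ n : ℕ, Real.log (Wt (n + 1)) / (n + 1) := by
    rw [Subadditive.lim]
    have : ((fun n : ℕ => Real.log (Wt n) / n) '' Set.Ici 1) =
        Set.range fun n : ℕ => Real.log (Wt (n + 1)) / (n + 1) := by
      ext x
      constructor
      · rintro ⟨n, hn, rfl⟩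
        obtain ⟨k, rfl⟩ : ∃ k, n = k + 1 := ⟨n - 1, (Nat.succ_pred_eq_of_pos hn).symm⟩
        exact ⟨k, by push_cast; ring⟩
      · rintro ⟨n, rfl⟩
        exact ⟨n + 1, by simp, by push_cast; ring⟩
    rw [this]
    rw [iInf, Set.range]
  rwa [heq] at hlim
end

section
/- Let (w_n)_{n≥1} be nonnegative reals with w_{n+m} ≤ W_n · W_m for all n, m ≥ 1 (W_n the partial sums). If limsup (1/n) log w_n > 0, then the series ∑_{n≥1} w_n e^{-sn} diverges at its critical exponent s = limsup (1/n) log w_n. -/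
open Filter Finset

set_option maxHeartbeats 1600000 in
theorem divergence_at_critical_exponent
    (w : ℕ → ℝ) (hw : ∀ n, 0 ≤ w n)
    (W : ℕ → ℝ) (hW : ∀ n, W n = ∑ k ∈ Finset.Icc 1 n, w k)
    (h : ∀ n m, 1 ≤ n → 1 ≤ m → w (n + m) ≤ W n * W m)
    (s : ℝ) (hs : s = Filter.limsup (fun n : ℕ => Real.log (w n) / n) Filter.atTop)
    (hspos : 0 < s) :
    ¬ Summable (fun n : ℕ => w n * Real.exp (-s * n)) := by
  intro hsum
  set r : ℝ := Real.exp (-s) with hr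
  have hr0 : 0 < r := Real.exp_pos _
  have hr1 : r < 1 := Real.exp_lt_one_iff.mpr (by linarith)
  have hexp : ∀ n : ℕ, Real.exp (-s * n) = r ^ n := by
    intro n
    rw [hr, ← Real.exp_nat_mul]
    ring_nf
  set a : ℕ → ℝ := fun n => w n * r ^ n with ha
  have ha0 : ∀ n, 0 ≤ a n := fun n => mul_nonneg (hw n) (pow_nonneg hr0.le n)
  have hsa : Summable a := by
    refine hsum.congr fun n => ?_
    rw [hexp]
  set S : ℝ := ∑' n, a n with hSdef
  -- basic facts about W
  have hW0 : W 0 = 0 := by simp [hW]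
  have hWnn : ∀ n, 0 ≤ W n := fun n => by
    rw [hW]; exact Finset.sum_nonneg fun i _ => hw i
  have hWsucc : ∀ n, W (n + 1) = W n + w (n + 1) := by
    intro n
    rw [hW, hW, Finset.sum_Icc_succ_top (Nat.le_add_left 1 n)]
  have hWmono : Monotone W := monotone_nat_of_le_succ fun n => by
    rw [hWsucc n]; linarith [hw (n + 1)]
  have hwleW : ∀ N, 1 ≤ N → w N ≤ W N := by
    intro N hN
    rw [hW]
    exact Finset.single_le_sum (fun i _ => hw i) (Finset.mem_Icc.mpr ⟨hN, le_rfl⟩)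
  -- the auxiliary sequence u
  set u : ℕ → ℝ := fun n => W n * r ^ n with hu
  have hu0 : ∀ n, 0 ≤ u n := fun n => mul_nonneg (hWnn n) (pow_nonneg hr0.le n)
  have hurec : ∀ n, u (n + 1) = r * u n + a (n + 1) := by
    intro n
    simp only [hu, ha, hWsucc n, pow_succ]
    ring
  -- partial sums of u are bounded
  have hPb : ∀ N, ∑ n ∈ Finset.range N, u n ≤ S / (1 - r) := by
    intro N
    have hmono : ∑ n ∈ Finset.range N, u n ≤ ∑ n ∈ Finset.range (N + 1), u n := by
      rw [Finset.sum_range_succ]; linarith [hu0 N]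
    have hsplit : ∑ n ∈ Finset.range (N + 1), u n
        = (∑ n ∈ Finset.range N, u (n + 1)) + u 0 := Finset.sum_range_succ' u N
    have hu00 : u 0 = 0 := by simp [hu, hW0]
    have hshift : ∑ n ∈ Finset.range N, u (n + 1)
        = r * ∑ n ∈ Finset.range N, u n + ∑ n ∈ Finset.range N, a (n + 1) := by
      rw [Finset.mul_sum, ← Finset.sum_add_distrib]
      exact Finset.sum_congr rfl fun n _ => hurec n
    have hsA : ∑ n ∈ Finset.range N, a (n + 1) ≤ S := by
      have h1 : ∑ n ∈ Finset.range (N + 1), a n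
          = (∑ n ∈ Finset.range N, a (n + 1)) + a 0 := Finset.sum_range_succ' a N
      have h2 : ∑ n ∈ Finset.range (N + 1), a n ≤ S :=
        Summable.sum_le_tsum _ (fun i _ => ha0 i) hsa
      linarith [ha0 0]
    have key : ∑ n ∈ Finset.range N, u n ≤ r * ∑ n ∈ Finset.range N, u n + S := by
      calc ∑ n ∈ Finset.range N, u n ≤ ∑ n ∈ Finset.range (N + 1), u n := hmono
        _ = r * ∑ n ∈ Finset.range N, u n + ∑ n ∈ Finset.range N, a (n + 1) := by
            rw [hsplit, hu00, hshift]; ring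
        _ ≤ r * ∑ n ∈ Finset.range N, u n + S := by linarith
    rw [le_div_iff₀ (by linarith : (0:ℝ) < 1 - r)]
    nlinarith
  have hsu : Summable u := summable_of_sum_range_le hu0 hPb
  set U : ℝ := ∑' n, u n with hUdef
  have hU0 : 0 ≤ U := tsum_nonneg hu0
  have htendU : Tendsto (fun N => ∑ n ∈ Finset.range N, u n) atTop (nhds U) :=
    hsu.hasSum.tendsto_sum_nat
  -- choose J with small tail
  obtain ⟨J, hJ⟩ : ∃ J, U - (1:ℝ)/4 < ∑ n ∈ Finset.range (J + 1), u n := by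
    have := htendU.eventually (eventually_gt_nhds (by linarith : U - (1:ℝ)/4 < U))
    rcases this.exists_forall_of_atTop with ⟨N₀, hN₀⟩
    exact ⟨N₀, hN₀ (N₀ + 1) (Nat.le_succ _)⟩
  -- choose k₀ with r^k₀ small
  obtain ⟨k₀, hk₀J, hk₀⟩ : ∃ k₀, J + 1 ≤ k₀ ∧ r ^ k₀ < 1 / (4 * (U + 1)) := by
    have := (tendsto_pow_atTop_nhds_zero_of_lt_one hr0.le hr1).eventually_lt_const
      (by positivity : (0:ℝ) < 1 / (4 * (U + 1)))
    rcases this.exists_forall_of_atTop with ⟨N₀, hN₀⟩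
    exact ⟨max N₀ (J + 1), le_max_right _ _, hN₀ _ (le_max_left _ _)⟩
  set m : ℕ := J + k₀ with hm
  have hm1 : 1 ≤ m := le_trans (by omega) (le_refl m)
  have hm0 : (0:ℝ) < m := by exact_mod_cast Nat.lt_of_lt_of_le Nat.zero_lt_one hm1
  -- the key smallness estimate at m
  have hrk14 : r ^ k₀ < 1/4 := by
    have h4 : (1:ℝ) / (4 * (U + 1)) ≤ 1/4 := by
      rw [div_le_div_iff₀ (by positivity) (by norm_num)]
      nlinarith
    linarith
  have hrkU : r ^ k₀ * U < 1/4 := by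
    rcases eq_or_lt_of_le hU0 with hU | hU
    · rw [← hU]; norm_num
    · have : r ^ k₀ * U < 1 / (4 * (U + 1)) * U := by
        exact mul_lt_mul_of_pos_right hk₀ hU
      have h2 : 1 / (4 * (U + 1)) * U ≤ 1/4 := by
        rw [div_mul_eq_mul_div, div_le_div_iff₀ (by positivity) (by norm_num)]
        nlinarith
      linarith
  -- sum over Ioc 0 J of u is close to U
  have hIocJ : ∑ j ∈ Finset.Ioc 0 J, u j ≤ U := by
    have : Finset.Ioc 0 J ⊆ Finset.range (J + 1) := by
      intro x hx
      simp only [Finset.mem_Ioc] at hx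
      simp [Finset.mem_range]; omega
    calc ∑ j ∈ Finset.Ioc 0 J, u j ≤ ∑ n ∈ Finset.range (J + 1), u n :=
          Finset.sum_le_sum_of_subset_of_nonneg this fun i _ _ => hu0 i
      _ ≤ U := Summable.sum_le_tsum _ (fun i _ => hu0 i) hsu
  have hIocJclose : U - 1/4 < ∑ j ∈ Finset.Ioc 0 J, u j + u 0 := by
    have h2 : Finset.Ioc 0 J = (Finset.range (J + 1)).erase 0 := by
      ext x
      simp only [Finset.mem_Ioc, Finset.mem_erase, Finset.mem_range]
      omega
    have h3 := Finset.sum_erase_add (Finset.range (J + 1)) u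
      (show 0 ∈ Finset.range (J + 1) by simp)
    rw [h2, h3]
    exact hJ
  have hu00 : u 0 = 0 := by simp [hu, hW0]
  -- key: r^m * (1 + V_m) < 1
  set V : ℝ := ∑ j ∈ Finset.Icc 1 m, W j with hV
  have hV0 : 0 ≤ V := Finset.sum_nonneg fun i _ => hWnn i
  have hkey : r ^ m * (1 + V) < 1 := by
    have hVIoc : V = ∑ j ∈ Finset.Ioc 0 m, W j := by
      rw [hV, ← Finset.Icc_add_one_left_eq_Ioc]; rfl
    have hconv : ∀ j ∈ Finset.Ioc 0 m, r ^ m * W j = u j * r ^ (m - j) := by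
      intro j hj
      simp only [Finset.mem_Ioc] at hj
      have : r ^ m = r ^ j * r ^ (m - j) := by
        rw [← pow_add]
        congr 1
        omega
      rw [this, hu]
      ring
    have hsum1 : ∑ j ∈ Finset.Ioc 0 J, u j * r ^ (m - j) ≤ r ^ k₀ * U := by
      have step : ∀ j ∈ Finset.Ioc 0 J, u j * r ^ (m - j) ≤ u j * r ^ k₀ := by
        intro j hj
        simp only [Finset.mem_Ioc] at hj
        refine mul_le_mul_of_nonneg_left ?_ (hu0 j)
        exact pow_le_pow_of_le_one hr0.le hr1.le (by omega)
      calc ∑ j ∈ Finset.Ioc 0 J, u j * r ^ (m - j)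
          ≤ ∑ j ∈ Finset.Ioc 0 J, u j * r ^ k₀ := Finset.sum_le_sum step
        _ = (∑ j ∈ Finset.Ioc 0 J, u j) * r ^ k₀ := by rw [← Finset.sum_mul]
        _ ≤ U * r ^ k₀ :=
            mul_le_mul_of_nonneg_right hIocJ (pow_nonneg hr0.le _)
        _ = r ^ k₀ * U := mul_comm _ _
    have hsum2 : ∑ j ∈ Finset.Ioc J m, u j * r ^ (m - j) < 1/4 := by
      have step : ∀ j ∈ Finset.Ioc J m, u j * r ^ (m - j) ≤ u j := by
        intro j hj
        nth_rewrite 2 [← mul_one (u j)]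
        exact mul_le_mul_of_nonneg_left
          (pow_le_one₀ hr0.le hr1.le) (hu0 j)
      have h1 : ∑ j ∈ Finset.Ioc J m, u j * r ^ (m - j) ≤ ∑ j ∈ Finset.Ioc J m, u j :=
        Finset.sum_le_sum step
      have h2 : ∑ j ∈ Finset.Ioc 0 J, u j + ∑ j ∈ Finset.Ioc J m, u j
          = ∑ j ∈ Finset.Ioc 0 m, u j :=
        Finset.sum_Ioc_consecutive u (Nat.zero_le J) (by omega)
      have h3 : ∑ j ∈ Finset.Ioc 0 m, u j ≤ U := by
        refine le_trans (Finset.sum_le_sum_of_subset_of_nonneg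
          (fun x hx => ?_) fun i _ _ => hu0 i) (Summable.sum_le_tsum (Finset.range (m+1)) (fun i _ => hu0 i) hsu)
        simp only [Finset.mem_Ioc] at hx
        simp [Finset.mem_range]; omega
      have := hIocJclose
      rw [hu00] at this
      linarith
    have hJm : J ≤ m := by omega
    have hsplit : ∑ j ∈ Finset.Ioc 0 m, u j * r ^ (m - j)
        = ∑ j ∈ Finset.Ioc 0 J, u j * r ^ (m - j)
          + ∑ j ∈ Finset.Ioc J m, u j * r ^ (m - j) :=
      (Finset.sum_Ioc_consecutive _ (Nat.zero_le J) hJm).symm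
    have hrm : r ^ m ≤ r ^ k₀ := pow_le_pow_of_le_one hr0.le hr1.le (by omega)
    calc r ^ m * (1 + V) = r ^ m + ∑ j ∈ Finset.Ioc 0 m, r ^ m * W j := by
          rw [hVIoc, mul_add, mul_one, Finset.mul_sum]
      _ = r ^ m + ∑ j ∈ Finset.Ioc 0 m, u j * r ^ (m - j) := by
          rw [Finset.sum_congr rfl hconv]
      _ < 1/4 + (1/4 + 1/4) := by
          rw [hsplit]
          have : r ^ m < 1/4 := lt_of_le_of_lt hrm hrk14
          linarith
      _ < 1 := by norm_num
  -- From hkey: log(1+V)/m < s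
  set B : ℝ := 1 + V with hB
  have hB1 : 1 ≤ B := by rw [hB]; linarith
  have hB0 : 0 < B := by linarith
  have hBexp : B < Real.exp (s * m) := by
    have hrm : r ^ m = Real.exp (-(s * m)) := by
      rw [hr, ← Real.exp_nat_mul]
      congr 1
      ring
    rw [hrm] at hkey
    have hmul : Real.exp (-(s * m)) * Real.exp (s * m) = 1 := by
      rw [← Real.exp_add, neg_add_cancel, Real.exp_zero]
    have h2 : Real.exp (-(s * m)) * B < Real.exp (-(s * m)) * Real.exp (s * m) := by
      rw [hmul]; exact hkey
    exact lt_of_mul_lt_mul_left h2 (Real.exp_pos _).le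
  have hLs : Real.log B / m < s := by
    rw [div_lt_iff₀ hm0]
    exact (Real.log_lt_iff_lt_exp hB0).mpr hBexp
  set L : ℝ := Real.log B / m with hL
  have hL0 : 0 ≤ L := div_nonneg (Real.log_nonneg hB1) hm0.le
  -- growth estimate: W (n + q) ≤ W n * (1 + V_q)
  have hstep : ∀ q : ℕ, ∀ n : ℕ, 1 ≤ n →
      W (n + q) ≤ W n * (1 + ∑ j ∈ Finset.Icc 1 q, W j) := by
    intro q
    induction q with
    | zero => intro n hn; simp
    | succ q ih =>
        intro n hn
        have h1 : W (n + (q + 1)) = W (n + q) + w (n + q + 1) := hWsucc (n + q)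
        have h2 : w (n + q + 1) ≤ W n * W (q + 1) := h n (q + 1) hn (Nat.le_add_left 1 q)
        have h3 : ∑ j ∈ Finset.Icc 1 (q + 1), W j
            = ∑ j ∈ Finset.Icc 1 q, W j + W (q + 1) :=
          Finset.sum_Icc_succ_top (Nat.le_add_left 1 q) W
        rw [h1, h3]
        nlinarith [ih n hn]
  have hiter : ∀ k : ℕ, W ((k + 1) * m) ≤ W m * B ^ k := by
    intro k
    induction k with
    | zero => simp
    | succ k ih =>
        have h1 : (k + 1 + 1) * m = (k + 1) * m + m := by ring
        have h2 : 1 ≤ (k + 1) * m := by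
          calc 1 = 1 * 1 := by norm_num
            _ ≤ (k + 1) * m := Nat.mul_le_mul (by omega) hm1
        calc W ((k + 1 + 1) * m) = W ((k + 1) * m + m) := by rw [h1]
          _ ≤ W ((k + 1) * m) * B := hstep m ((k+1)*m) h2
          _ ≤ (W m * B ^ k) * B := mul_le_mul_of_nonneg_right ih hB0.le
          _ = W m * B ^ (k + 1) := by ring
  set C : ℝ := max (W m) 1 with hC
  have hC1 : 1 ≤ C := le_max_right _ _
  have hC0 : 0 < C := by linarith
  have hwN : ∀ N : ℕ, 1 ≤ N → w N ≤ C * B ^ (N / m) := by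
    intro N hN
    have hlt : N ≤ (N / m + 1) * m := by
      have h1 := Nat.lt_div_mul_add (a := N) (Nat.lt_of_lt_of_le Nat.zero_lt_one hm1)
      rw [Nat.succ_mul]
      omega
    calc w N ≤ W N := hwleW N hN
      _ ≤ W ((N / m + 1) * m) := hWmono hlt
      _ ≤ W m * B ^ (N / m) := hiter (N / m)
      _ ≤ C * B ^ (N / m) :=
          mul_le_mul_of_nonneg_right (le_max_left _ _) (pow_nonneg hB0.le _)
  -- log estimate
  have hlog : ∀ N : ℕ, 1 ≤ N → Real.log (w N) / N ≤ Real.log C / N + L := by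
    intro N hN
    have hN0 : (0:ℝ) < N := by exact_mod_cast hN
    have hlogC0 : 0 ≤ Real.log C := Real.log_nonneg hC1
    have hlogB0 : 0 ≤ Real.log B := Real.log_nonneg hB1
    have hbound : Real.log (w N) ≤ Real.log C + (N / m : ℕ) * Real.log B := by
      rcases eq_or_lt_of_le (hw N) with h0 | h0
      · rw [← h0, Real.log_zero]
        positivity
      · calc Real.log (w N) ≤ Real.log (C * B ^ (N / m)) :=
              Real.log_le_log h0 (hwN N hN)
          _ = Real.log C + (N / m : ℕ) * Real.log B := by
              rw [Real.log_mul hC0.ne' (by positivity), Real.log_pow]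
    have hcast : ((N / m : ℕ) : ℝ) ≤ (N : ℝ) / m := Nat.cast_div_le
    have h2 : ((N / m : ℕ) : ℝ) * Real.log B / N ≤ L := by
      rw [hL, div_le_div_iff₀ hN0 hm0]
      calc ((N / m : ℕ) : ℝ) * Real.log B * m ≤ (N : ℝ) / m * Real.log B * m := by
            exact mul_le_mul_of_nonneg_right
              (mul_le_mul_of_nonneg_right hcast hlogB0) hm0.le
        _ = Real.log B * N := by field_simp
    calc Real.log (w N) / N ≤ (Real.log C + (N / m : ℕ) * Real.log B) / N := by
          gcongr
      _ = Real.log C / N + ((N / m : ℕ) : ℝ) * Real.log B / N := by ring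
      _ ≤ Real.log C / N + L := by linarith
  -- finish with limsup
  set f : ℕ → ℝ := fun n : ℕ => Real.log (w n) / n with hf
  set b : ℝ := L + (s - L) / 2 with hb
  have hbs : b < s := by rw [hb]; linarith
  have hev : ∀ᶠ N in atTop, f N ≤ b := by
    have hε : (0:ℝ) < (s - L) / 2 := by linarith
    have htc : Tendsto (fun N : ℕ => Real.log C / N) atTop (nhds 0) :=
      tendsto_const_div_atTop_nhds_zero_nat _
    have h1 : ∀ᶠ N : ℕ in atTop, Real.log C / N < (s - L) / 2 :=
      htc.eventually_lt_const hε
    filter_upwards [h1, eventually_ge_atTop 1] with N hN1 hN2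
    have := hlog N hN2
    rw [hf, hb]
    dsimp only
    linarith
  have hmem : b ∈ {x : ℝ | ∀ᶠ n in atTop, f n ≤ x} := hev
  have hsinf : s = sInf {x : ℝ | ∀ᶠ n in atTop, f n ≤ x} := by
    rw [hs, Filter.limsup_eq]
  by_cases hbdd : BddBelow {x : ℝ | ∀ᶠ n in atTop, f n ≤ x}
  · have : s ≤ b := hsinf ▸ csInf_le hbdd hmem
    linarith
  · have : sInf {x : ℝ | ∀ᶠ n in atTop, f n ≤ x} = 0 :=
      Real.sInf_of_not_bddBelow hbdd
    rw [this] at hsinf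
    linarith
end

section
/- For a countable family (d_i) of nonnegative reals with counting function N(R) = #{ i : d_i ≤ R } finite for all R, the critical exponent of the series ∑_i e^{-s d_i} equals limsup_{R→∞} (1/R) log N(R). -/
open Filter

private lemma ncard_le_eq (I : Type*) (d : I → ℝ)
    (hfin : ∀ R : ℝ, {i : I | d i ≤ R}.Finite) (R : ℝ) :
    Nat.card {i : I // d i ≤ R} = (hfin R).toFinset.card := by
  have h : Nat.card {i : I // d i ≤ R} = Nat.card ↥{i : I | d i ≤ R} := rfl
  rw [h, Nat.card_coe_set_eq, Set.ncard_eq_toFinset_card _ (hfin R)]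

private lemma partA (I : Type*) (d : I → ℝ)
    (hfin : ∀ R : ℝ, {i : I | d i ≤ R}.Finite)
    {s : ℝ} (hs0 : 0 ≤ s) (hsum : Summable fun i : I => Real.exp (-s * d i)) :
    Filter.limsup
        (fun R : ℝ => ((Real.log (Nat.card {i : I // d i ≤ R}) / R : ℝ) : EReal))
        Filter.atTop ≤ (s : EReal) := by
  rcases isEmpty_or_nonempty I with hI | hI
  · have : (fun R : ℝ => ((Real.log (Nat.card {i : I // d i ≤ R}) / R : ℝ) : EReal))
        = fun _ => (0 : EReal) := by
      funext R
      simp [Nat.card_of_isEmpty]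
    rw [this, limsup_const]
    exact_mod_cast EReal.coe_le_coe_iff.mpr hs0
  · obtain ⟨i₀⟩ := hI
    set C : ℝ := ∑' i : I, Real.exp (-s * d i) with hC
    have hCpos : 0 < C :=
      Summable.tsum_pos hsum (fun i => (Real.exp_pos _).le) i₀ (Real.exp_pos _)
    -- N R ≤ C * exp (s * R)
    have hN : ∀ R : ℝ, ((hfin R).toFinset.card : ℝ) ≤ C * Real.exp (s * R) := by
      intro R
      have h1 : ((hfin R).toFinset.card : ℝ) * Real.exp (-s * R) ≤ C := by
        have := Finset.sum_le_sum (s := (hfin R).toFinset)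
          (f := fun _ : I => Real.exp (-s * R)) (g := fun i => Real.exp (-s * d i))
          (fun i hi => by
            have hiR : d i ≤ R := by simpa using (hfin R).mem_toFinset.mp hi
            exact Real.exp_le_exp.mpr (by nlinarith))
        have h2 := Summable.sum_le_tsum ((hfin R).toFinset)
          (fun i _ => (Real.exp_pos _).le) hsum
        simp only [Finset.sum_const, nsmul_eq_mul] at this
        linarith
      calc ((hfin R).toFinset.card : ℝ)
          = ((hfin R).toFinset.card : ℝ) * Real.exp (-s * R) * Real.exp (s * R) := by
            rw [mul_assoc, ← Real.exp_add]; ring_nf; simp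
        _ ≤ C * Real.exp (s * R) :=
            mul_le_mul_of_nonneg_right h1 (Real.exp_pos _).le
    -- eventually log N R / R ≤ log C / R + s
    have hev : ∀ᶠ R : ℝ in atTop,
        ((Real.log (Nat.card {i : I // d i ≤ R}) / R : ℝ) : EReal)
          ≤ ((Real.log C / R + s : ℝ) : EReal) := by
      filter_upwards [eventually_ge_atTop (max (d i₀) 1)] with R hR
      have hR1 : (1 : ℝ) ≤ R := le_trans (le_max_right _ _) hR
      have hRpos : (0 : ℝ) < R := lt_of_lt_of_le one_pos hR1
      have hNe : 1 ≤ (hfin R).toFinset.card := by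
        refine Finset.card_pos.mpr ⟨i₀, ?_⟩
        exact (hfin R).mem_toFinset.mpr (le_trans (le_max_left _ _) hR)
      have hNpos : (0 : ℝ) < ((hfin R).toFinset.card : ℝ) := by exact_mod_cast hNe
      rw [EReal.coe_le_coe_iff, ncard_le_eq I d hfin R]
      have hlog : Real.log ((hfin R).toFinset.card : ℝ) ≤ Real.log C + s * R := by
        calc Real.log ((hfin R).toFinset.card : ℝ)
            ≤ Real.log (C * Real.exp (s * R)) := Real.log_le_log hNpos (hN R)
          _ = Real.log C + s * R := by
              rw [Real.log_mul hCpos.ne' (Real.exp_ne_zero _), Real.log_exp]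
      rw [div_add' _ _ _ hRpos.ne', div_le_div_iff_of_pos_right hRpos]
      linarith
    have hlim : Filter.Tendsto (fun R : ℝ => ((Real.log C / R + s : ℝ) : EReal))
        atTop (nhds (s : EReal)) := by
      rw [EReal.tendsto_coe]
      have : Filter.Tendsto (fun R : ℝ => Real.log C / R) atTop (nhds 0) :=
        Filter.Tendsto.div_atTop tendsto_const_nhds tendsto_id
      simpa using this.add_const s
    calc Filter.limsup _ Filter.atTop
        ≤ Filter.limsup (fun R : ℝ => ((Real.log C / R + s : ℝ) : EReal)) atTop :=
          limsup_le_limsup hev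
      _ = (s : EReal) := hlim.limsup_eq

private lemma partB (I : Type*) (d : I → ℝ) (hd : ∀ i, 0 ≤ d i)
    (hfin : ∀ R : ℝ, {i : I | d i ≤ R}.Finite)
    {s' s R₀ : ℝ} (hs' : 0 < s') (hss : s' < s)
    (hbound : ∀ R : ℝ, R₀ ≤ R → ((hfin R).toFinset.card : ℝ) ≤ Real.exp (s' * R)) :
    Summable fun i : I => Real.exp (-s * d i) := by
  classical
  have hspos : 0 < s := lt_trans hs' hss
  set C₀ : ℝ := ((hfin R₀).toFinset.card : ℝ) with hC₀
  have hC₀0 : 0 ≤ C₀ := Nat.cast_nonneg _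
  have hmono : ∀ {R R' : ℝ}, R ≤ R' →
      ((hfin R).toFinset.card : ℝ) ≤ ((hfin R').toFinset.card : ℝ) := by
    intro R R' h
    exact_mod_cast Finset.card_le_card
      (Set.Finite.toFinset_subset_toFinset.mpr (fun i hi => le_trans hi h))
  have hNn : ∀ n : ℕ, ((hfin ((n : ℝ) + 1)).toFinset.card : ℝ)
      ≤ C₀ + Real.exp (s' * ((n : ℝ) + 1)) := by
    intro n
    rcases le_or_gt ((n : ℝ) + 1) R₀ with h | h
    · exact le_add_of_le_of_nonneg (hmono h) (Real.exp_pos _).le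
    · exact le_add_of_nonneg_of_le hC₀0 (hbound _ h.le)
  set a : ℕ → ℝ := fun n => (C₀ + Real.exp (s' * ((n : ℝ) + 1))) * Real.exp (-s * n) with ha
  have ha_eq : ∀ n : ℕ, a n
      = C₀ * (Real.exp (-s)) ^ n + Real.exp s' * (Real.exp (s' - s)) ^ n := by
    intro n
    rw [ha]
    simp only
    rw [← Real.exp_nat_mul, ← Real.exp_nat_mul, add_mul, ← Real.exp_add, ← Real.exp_add]
    ring_nf
  have hsa : Summable a := by
    rw [funext ha_eq]
    exact Summable.add
      ((summable_geometric_of_lt_one (Real.exp_pos _).le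
        (Real.exp_lt_one_iff.mpr (by linarith))).mul_left _)
      ((summable_geometric_of_lt_one (Real.exp_pos _).le
        (Real.exp_lt_one_iff.mpr (by linarith))).mul_left _)
  have ha0 : ∀ n, 0 ≤ a n := fun n =>
    mul_nonneg (add_nonneg hC₀0 (Real.exp_pos _).le) (Real.exp_pos _).le
  refine summable_of_sum_le (c := ∑' n, a n) (fun i => (Real.exp_pos _).le) (fun F => ?_)
  set M : ℕ := F.sup (fun i => ⌊d i⌋₊) with hM
  have hmaps : ∀ i ∈ F, ⌊d i⌋₊ ∈ Finset.range (M + 1) := by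
    intro i hi
    exact Finset.mem_range.mpr (Nat.lt_succ_of_le (Finset.le_sup (f := fun i => ⌊d i⌋₊) hi))
  calc ∑ i ∈ F, Real.exp (-s * d i)
      = ∑ n ∈ Finset.range (M + 1), ∑ i ∈ F.filter (fun i => ⌊d i⌋₊ = n),
          Real.exp (-s * d i) :=
        (Finset.sum_fiberwise_of_maps_to hmaps _).symm
    _ ≤ ∑ n ∈ Finset.range (M + 1), a n := by
        refine Finset.sum_le_sum (fun n _ => ?_)
        have h1 : ∑ i ∈ F.filter (fun i => ⌊d i⌋₊ = n), Real.exp (-s * d i)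
            ≤ ((F.filter (fun i => ⌊d i⌋₊ = n)).card : ℝ) * Real.exp (-s * n) := by
          have := Finset.sum_le_card_nsmul (F.filter (fun i => ⌊d i⌋₊ = n))
            (fun i => Real.exp (-s * d i)) (Real.exp (-s * n))
            (fun i hi => by
              have hfl : ⌊d i⌋₊ = n := (Finset.mem_filter.mp hi).2
              have : (n : ℝ) ≤ d i := by
                rw [← hfl]; exact Nat.floor_le (hd i)
              exact Real.exp_le_exp.mpr (by nlinarith))
          simpa [nsmul_eq_mul] using this
        have h2 : ((F.filter (fun i => ⌊d i⌋₊ = n)).card : ℝ)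
            ≤ ((hfin ((n : ℝ) + 1)).toFinset.card : ℝ) := by
          refine Nat.cast_le.mpr (Finset.card_le_card (fun i hi => ?_))
          have hfl : ⌊d i⌋₊ = n := (Finset.mem_filter.mp hi).2
          refine (hfin _).mem_toFinset.mpr ?_
          have h3 := Nat.lt_floor_add_one (d i)
          rw [hfl] at h3
          show d i ≤ (n : ℝ) + 1
          exact le_of_lt (by exact_mod_cast h3)
        calc ∑ i ∈ F.filter (fun i => ⌊d i⌋₊ = n), Real.exp (-s * d i)
            ≤ ((F.filter (fun i => ⌊d i⌋₊ = n)).card : ℝ) * Real.exp (-s * n) := h1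
          _ ≤ ((hfin ((n : ℝ) + 1)).toFinset.card : ℝ) * Real.exp (-s * n) :=
              mul_le_mul_of_nonneg_right h2 (Real.exp_pos _).le
          _ ≤ a n := mul_le_mul_of_nonneg_right (hNn n) (Real.exp_pos _).le
    _ ≤ ∑' n, a n := Summable.sum_le_tsum _ (fun n _ => ha0 n) hsa

theorem critical_exponent_eq_orbital_growth
    (I : Type*) [Countable I]
    (d : I → ℝ) (hd : ∀ i, 0 ≤ d i)
    (hfin : ∀ R : ℝ, {i : I | d i ≤ R}.Finite)
    (δ : EReal)
    (hδ : δ = sInf {s : EReal | ∃ t : ℝ, s = (t : EReal) ∧ 0 ≤ t ∧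
        Summable fun i : I => Real.exp (-t * d i)}) :
    δ = Filter.limsup
        (fun R : ℝ => ((Real.log (Nat.card {i : I // d i ≤ R}) / R : ℝ) : EReal))
        Filter.atTop := by
  subst hδ
  set f : ℝ → EReal :=
    fun R : ℝ => ((Real.log (Nat.card {i : I // d i ≤ R}) / R : ℝ) : EReal) with hf
  set L : EReal := Filter.limsup f Filter.atTop with hL
  set S : Set EReal := {s : EReal | ∃ t : ℝ, s = (t : EReal) ∧ 0 ≤ t ∧
      Summable fun i : I => Real.exp (-t * d i)} with hS
  -- 0 ≤ L
  have hL0 : (0 : EReal) ≤ L := by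
    rcases isEmpty_or_nonempty I with hI | hI
    · have : f = fun _ => (0 : EReal) := by
        funext R; simp [hf, Nat.card_of_isEmpty]
      rw [hL, this, limsup_const]
    · obtain ⟨i₀⟩ := hI
      have hev : ∀ᶠ R : ℝ in atTop, (0 : EReal) ≤ f R := by
        filter_upwards [eventually_ge_atTop (max (d i₀) 1)] with R hR
        have hR1 : (1 : ℝ) ≤ R := le_trans (le_max_right _ _) hR
        have hRpos : (0 : ℝ) < R := lt_of_lt_of_le one_pos hR1
        have hNe : 1 ≤ (hfin R).toFinset.card :=
          Finset.card_pos.mpr ⟨i₀, (hfin R).mem_toFinset.mpr (le_trans (le_max_left _ _) hR)⟩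
        have h0 : (0 : ℝ) ≤ Real.log (Nat.card {i : I // d i ≤ R}) / R := by
          apply div_nonneg _ hRpos.le
          rw [ncard_le_eq I d hfin R]
          exact Real.log_nonneg (by exact_mod_cast hNe)
        show (0 : EReal) ≤ ((Real.log (Nat.card {i : I // d i ≤ R}) / R : ℝ) : EReal)
        exact_mod_cast EReal.coe_le_coe_iff.mpr h0
      calc (0 : EReal) = Filter.limsup (fun _ : ℝ => (0 : EReal)) atTop :=
            (limsup_const _).symm
        _ ≤ L := limsup_le_limsup hev
  refine le_antisymm ?_ ?_
  · -- sInf S ≤ L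
    by_contra hcon
    push_neg at hcon
    obtain ⟨s, hLs, hsInf⟩ := EReal.exists_between_coe_real hcon
    obtain ⟨s', hLs', hs's⟩ := EReal.exists_between_coe_real hLs
    have hs'0 : (0 : ℝ) < s' := by
      have : ((0 : ℝ) : EReal) < (s' : EReal) := lt_of_le_of_lt (by exact_mod_cast hL0) hLs'
      exact_mod_cast this
    have hs's' : s' < s := EReal.coe_lt_coe_iff.mp hs's
    have hevlt : ∀ᶠ R : ℝ in atTop, f R < (s' : EReal) :=
      eventually_lt_of_limsup_lt hLs'
    obtain ⟨R₀, hR₀⟩ := eventually_atTop.mp hevlt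
    have hbound : ∀ R : ℝ, max R₀ 1 ≤ R →
        ((hfin R).toFinset.card : ℝ) ≤ Real.exp (s' * R) := by
      intro R hR
      have hR1 : (1 : ℝ) ≤ R := le_trans (le_max_right _ _) hR
      have hRpos : (0 : ℝ) < R := lt_of_lt_of_le one_pos hR1
      have hflt : f R < (s' : EReal) := hR₀ R (le_trans (le_max_left _ _) hR)
      rw [hf] at hflt
      have hlt : Real.log (Nat.card {i : I // d i ≤ R}) / R < s' :=
        EReal.coe_lt_coe_iff.mp hflt
      rw [ncard_le_eq I d hfin R] at hlt
      rcases Nat.eq_zero_or_pos (hfin R).toFinset.card with h0 | hpos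
      · rw [h0]; exact le_trans (by norm_num) (Real.exp_pos _).le
      · have hNpos : (0 : ℝ) < ((hfin R).toFinset.card : ℝ) := by exact_mod_cast hpos
        have : Real.log ((hfin R).toFinset.card : ℝ) < s' * R := by
          rw [div_lt_iff₀ hRpos] at hlt; linarith [hlt]
        calc ((hfin R).toFinset.card : ℝ)
            = Real.exp (Real.log ((hfin R).toFinset.card : ℝ)) := (Real.exp_log hNpos).symm
          _ ≤ Real.exp (s' * R) := Real.exp_le_exp.mpr this.le
    have hsum : Summable fun i : I => Real.exp (-s * d i) :=
      partB I d hd hfin hs'0 hs's' hbound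
    have hs0 : (0 : ℝ) ≤ s := le_of_lt (lt_trans hs'0 hs's')
    have : sInf S ≤ (s : EReal) := sInf_le ⟨s, rfl, hs0, hsum⟩
    exact absurd (lt_of_le_of_lt this hsInf) (lt_irrefl _)
  · -- L ≤ sInf S
    refine le_sInf (fun x hx => ?_)
    obtain ⟨t, rfl, ht0, hsum⟩ := hx
    exact partA I d hfin ht0 hsum
end

section
/- Let G be a group acting by isometries on a metric space X with basepoint o, and let H ≤ G, g ∈ G. Suppose every reduced word h_1 g h_2 g ⋯ h_k g (k ≥ 1, h_i ∈ H \ {1}) gives a distinct element of G, and that the triangle inequality gives d(o, h_1 g ⋯ h_k g · o) ≤ ∑_{i=1}^k ( d(o, h_i·o) + d(o, g·o) ). Then for every s ≥ 0, ∑_{γ∈G} e^{-s d(o, γ·o)} ≥ ∑_{k≥1} ( e^{-s d(o, g·o)} · ∑_{h∈H\{1}} e^{-s d(o, h·o)} )^k. -/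
open Filter ENNReal

lemma tsum_pi_pow' {α : Type*} (w : α → ℝ≥0∞) (n : ℕ) :
    ∑' f : Fin n → α, ∏ i, w (f i) = (∑' a, w a) ^ n := by
  induction n with
  | zero =>
    simp [tsum_eq_single (Fin.elim0 : Fin 0 → α) (fun f hf => absurd (Subsingleton.elim f _) hf)]
  | succ n ih =>
    have := ((Fin.consEquiv (fun _ : Fin (n+1) => α)).tsum_eq
      (fun f : Fin (n+1) → α => ∏ i, w (f i))).symm
    rw [this]
    have h2 : ∑' (c : α × (Fin n → α)), ∏ i : Fin (n + 1),
        w ((Fin.consEquiv fun _ => α) c i)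
        = ∑' (c : α × (Fin n → α)), (fun a (f : Fin n → α) => w a * ∏ i, w (f i)) c.1 c.2 := by
      refine tsum_congr fun c => ?_
      simp [Fin.prod_univ_succ]
    rw [h2, ENNReal.tsum_prod (f := fun a (f : Fin n → α) => w a * ∏ i, w (f i))]
    calc ∑' (a : α) (b : Fin n → α), w a * ∏ i, w (b i)
        = ∑' (a : α), w a * ∑' (b : Fin n → α), ∏ i, w (b i) :=
          tsum_congr fun a => ENNReal.tsum_mul_left
      _ = (∑' a, w a) * ∑' (b : Fin n → α), ∏ i, w (b i) := ENNReal.tsum_mul_right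
      _ = (∑' a, w a) ^ (n + 1) := by rw [ih, ← pow_succ']

theorem poincare_series_free_product_lower_bound
    (G : Type*) [Group G] (X : Type*) [MetricSpace X]
    [MulAction G X] (hiso : ∀ g : G, Isometry (fun x : X => g • x))
    (o : X) (H : Subgroup G) (g : G)
    (hinj : Function.Injective
      (fun p : Σ k : ℕ, {f : Fin (k + 1) → H // ∀ i, f i ≠ 1} =>
        (List.ofFn (fun i => ((p.2.1 i : G) * g))).prod))
    (htri : ∀ (k : ℕ) (f : Fin (k + 1) → H),
      dist o ((List.ofFn (fun i => ((f i : G) * g))).prod • o) ≤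
        ∑ i : Fin (k + 1), (dist o ((f i : G) • o) + dist o (g • o))) :
    ∀ s : ℝ, 0 ≤ s →
      ∑' k : ℕ,
          (ENNReal.ofReal (Real.exp (-s * dist o (g • o))) *
            ∑' h : {h : H // h ≠ 1},
              ENNReal.ofReal (Real.exp (-s * dist o ((h : G) • o)))) ^ (k + 1)
        ≤ ∑' γ : G, ENNReal.ofReal (Real.exp (-s * dist o (γ • o))) := by
  intro s hs
  set w : G → ℝ≥0∞ := fun γ => ENNReal.ofReal (Real.exp (-s * dist o (γ • o))) with hw
  set u : {h : H // h ≠ 1} → ℝ≥0∞ := fun h =>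
    ENNReal.ofReal (Real.exp (-s * (dist o ((h : G) • o) + dist o (g • o)))) with hu
  -- Step 1: each factor of the geometric term equals ∑' u
  have hbase : (ENNReal.ofReal (Real.exp (-s * dist o (g • o))) *
      ∑' h : {h : H // h ≠ 1}, ENNReal.ofReal (Real.exp (-s * dist o ((h : G) • o))))
      = ∑' h : {h : H // h ≠ 1}, u h := by
    rw [← ENNReal.tsum_mul_left]
    refine tsum_congr fun h => ?_
    rw [← ENNReal.ofReal_mul (Real.exp_nonneg _), ← Real.exp_add, hu]
    ring_nf
  -- Step 2: pointwise bound
  have hpt : ∀ (k : ℕ) (q : {f : Fin (k + 1) → H // ∀ i, f i ≠ 1}),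
      (∏ i : Fin (k + 1), u ⟨q.1 i, q.2 i⟩) ≤
        w ((List.ofFn (fun i => ((q.1 i : G) * g))).prod) := by
    intro k q
    have h1 : (∏ i : Fin (k + 1), u ⟨q.1 i, q.2 i⟩) =
        ENNReal.ofReal (Real.exp (-s * ∑ i : Fin (k + 1),
          (dist o ((q.1 i : G) • o) + dist o (g • o)))) := by
      rw [Finset.mul_sum, Real.exp_sum, ENNReal.ofReal_prod_of_nonneg
        (fun i _ => Real.exp_nonneg _)]
    rw [h1, hw]
    refine ENNReal.ofReal_le_ofReal (Real.exp_le_exp.2 ?_)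
    have h2 := mul_le_mul_of_nonneg_left (htri k q.1) hs
    simpa [neg_mul] using neg_le_neg h2
  -- Step 3: combine
  calc ∑' k : ℕ,
        (ENNReal.ofReal (Real.exp (-s * dist o (g • o))) *
          ∑' h : {h : H // h ≠ 1},
            ENNReal.ofReal (Real.exp (-s * dist o ((h : G) • o)))) ^ (k + 1)
      = ∑' k : ℕ, ∑' f : Fin (k + 1) → {h : H // h ≠ 1}, ∏ i, u (f i) := by
        refine tsum_congr fun k => ?_
        rw [hbase, ← tsum_pi_pow' u (k + 1)]
    _ = ∑' k : ℕ, ∑' q : {f : Fin (k + 1) → H // ∀ i, f i ≠ 1},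
          ∏ i, u ⟨q.1 i, q.2 i⟩ := by
        refine tsum_congr fun k => ?_
        exact ((Equiv.subtypePiEquivPi (β := fun _ : Fin (k+1) => H)
          (p := fun _ h => h ≠ 1)).tsum_eq
          (fun f : Fin (k + 1) → {h : H // h ≠ 1} => ∏ i, u (f i))).symm
    _ ≤ ∑' k : ℕ, ∑' q : {f : Fin (k + 1) → H // ∀ i, f i ≠ 1},
          w ((List.ofFn (fun i => ((q.1 i : G) * g))).prod) :=
        ENNReal.tsum_le_tsum fun k => ENNReal.tsum_le_tsum fun q => hpt k q
    _ = ∑' p : Σ k : ℕ, {f : Fin (k + 1) → H // ∀ i, f i ≠ 1},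
          w ((List.ofFn (fun i => ((p.2.1 i : G) * g))).prod) :=
        (ENNReal.tsum_sigma' (fun p : Σ k : ℕ, {f : Fin (k + 1) → H // ∀ i, f i ≠ 1} =>
          w ((List.ofFn (fun i => ((p.2.1 i : G) * g))).prod))).symm
    _ ≤ ∑' γ : G, w γ := tsum_comp_le_tsum_of_injective hinj w
end
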